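/- Let ℓ be a prime, r ≥ 1, and let t, u, n be integers with n ≥ 1, u ≡ 1 (mod n), u + 1 − t ≡ 0 (mod n²). Write a = ν_ℓ(n), t₁ = (t−2)/n, u₁ = (u+1−t)/n². Then #{σ ∈ M₂(ℤ/ℓ^r ℤ) : tr σ ≡ t, det σ ≡ u (mod ℓ^r), σ ≡ I (mod ℓ^a)} = Σ_{u₂ mod ℓ^{r−a}, u₂ ≡ u₁ (mod ℓ^{r−2a})} #{σ ∈ M₂(ℤ/ℓ^{r−a}ℤ) : tr σ ≡ t₁ (mod ℓ^{r−a}), det σ ≡ u₂ (mod ℓ^{r−a})}, assuming r ≥ 2a. -/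

import Mathlib

theorem sum_fiber {α β : Type*} [Fintype α] [Fintype β] [DecidableEq β]
    (f : α → β) (p : α → Prop) [DecidablePred p] (Q : β → Prop) [DecidablePred Q] :
    (∑ b : β, if Q b then Fintype.card {a : α // p a ∧ f a = b} else 0) =
      Fintype.card {a : α // p a ∧ Q (f a)} := by
  simp only [Fintype.card_subtype, Finset.card_filter]
  have h1 : ∀ b : β, (if Q b then ∑ i : α, if p i ∧ f i = b then 1 else 0 else 0)
      = ∑ i : α, if f i = b ∧ (p i ∧ Q b) then 1 else 0 := by
    intro b
    split
    · next h => congr 1; ext i; simp [h, and_comm]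
    · next h => simp_all
  simp only [h1]
  simp only [ite_and]
  rw [Finset.sum_comm]
  simp [Finset.sum_ite_eq]


theorem aux_cancel (p : ℕ) (hp : p ≠ 0) (b c N : ℕ) (hN : N = b + c) (x y : ℤ) :
    (((p : ℤ)^b * x : ℤ) : ZMod (p^N)) = (((p:ℤ)^b * y : ℤ) : ZMod (p^N))
      ↔ ((x : ZMod (p^c)) = (y : ZMod (p^c))) := by
  subst hN
  rw [ZMod.intCast_eq_intCast_iff, ZMod.intCast_eq_intCast_iff,
    Int.modEq_iff_dvd, Int.modEq_iff_dvd]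
  push_cast
  rw [pow_add, ← mul_sub, mul_dvd_mul_iff_left (a := (p:ℤ)^b) (pow_ne_zero _ (by exact_mod_cast hp))]

theorem coprime_cancel {K m : ℕ} [NeZero K] (hc : Nat.Coprime m K) (x y : ℤ) :
    (((m : ℤ) * x : ℤ) : ZMod K) = (((m : ℤ) * y : ℤ) : ZMod K) ↔
      (x : ZMod K) = (y : ZMod K) := by
  have hu : IsUnit ((m : ℕ) : ZMod K) := (ZMod.isUnit_iff_coprime m K).2 hc
  push_cast
  exact ⟨fun h => hu.mul_left_cancel h, fun h => by rw [h]⟩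

theorem val_cast_down (N M : ℕ) [NeZero N] (h : M ∣ N) (x : ℤ) :
    (((x : ZMod N).val : ℤ) : ZMod M) = (x : ZMod M) := by
  rw [Int.cast_natCast, ZMod.natCast_val,
    show ((x : ZMod N).cast : ZMod M) = ZMod.castHom h (ZMod M) (x : ZMod N) from rfl,
    map_intCast]

theorem val_cast_down' (N M : ℕ) [NeZero N] (h : M ∣ N) (x : ℤ) :
    (((x : ZMod N).val : ℕ) : ZMod M) = (x : ZMod M) := by
  have := val_cast_down N M h x
  rwa [Int.cast_natCast] at this

theorem val_cast_id (N : ℕ) [NeZero N] (x : ZMod N) : ((x.val : ℤ) : ZMod N) = x := by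
  rw [Int.cast_natCast, ZMod.natCast_val, ZMod.cast_id]

/-- `σ = I + c·(lift τ)` -/
def Gmap (M K : ℕ) (c : ℤ) (τ : Matrix (Fin 2) (Fin 2) (ZMod K)) :
    Matrix (Fin 2) (Fin 2) (ZMod M) :=
  Matrix.of fun i j =>
    (((if i = j then (1:ℤ) else 0) + c * ((τ i j).val : ℤ) : ℤ) : ZMod M)

/-- `τ = e·((σ − I)/d)` -/
def Fmap (M K : ℕ) (d e : ℤ) (σ : Matrix (Fin 2) (Fin 2) (ZMod M)) :
    Matrix (Fin 2) (Fin 2) (ZMod K) :=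
  Matrix.of fun i j =>
    ((e * ((((σ i j).val : ℤ) - (if i = j then (1:ℤ) else 0)) / d) : ℤ) : ZMod K)

theorem Gmap_apply (M K : ℕ) (c : ℤ) (τ : Matrix (Fin 2) (Fin 2) (ZMod K)) (i j : Fin 2) :
    Gmap M K c τ i j
      = (((if i = j then (1:ℤ) else 0) + c * ((τ i j).val : ℤ) : ℤ) : ZMod M) := rfl

theorem Fmap_apply (M K : ℕ) (d e : ℤ) (σ : Matrix (Fin 2) (Fin 2) (ZMod M)) (i j : Fin 2) :
    Fmap M K d e σ i j
      = ((e * ((((σ i j).val : ℤ) - (if i = j then (1:ℤ) else 0)) / d) : ℤ) : ZMod K) := rfl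

theorem Gmap_trace (M K : ℕ) (c : ℤ) (τ : Matrix (Fin 2) (Fin 2) (ZMod K)) :
    (Gmap M K c τ).trace
      = ((2 + c * (((τ 0 0).val : ℤ) + ((τ 1 1).val : ℤ)) : ℤ) : ZMod M) := by
  rw [Matrix.trace_fin_two, Gmap_apply, Gmap_apply]
  norm_num
  push_cast
  ring

theorem Gmap_det (M K : ℕ) (c : ℤ) (τ : Matrix (Fin 2) (Fin 2) (ZMod K)) :
    (Gmap M K c τ).det
      = ((1 + c * (((τ 0 0).val : ℤ) + ((τ 1 1).val : ℤ))
          + c^2 * (((τ 0 0).val : ℤ) * ((τ 1 1).val : ℤ)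
            - ((τ 0 1).val : ℤ) * ((τ 1 0).val : ℤ)) : ℤ) : ZMod M) := by
  rw [Matrix.det_fin_two, Gmap_apply, Gmap_apply, Gmap_apply, Gmap_apply]
  norm_num [Fin.ext_iff]
  push_cast
  ring

open Classical in
theorem core' (ℓ : ℕ) (hℓ : ℓ.Prime) [NeZero ℓ] (a w : ℕ)
    (m : ℕ) (hm : ¬ ℓ ∣ m) (t u t₁ u₁ : ℤ)
    (ht : t = 2 + (ℓ : ℤ) ^ a * m * t₁)
    (hu : u = 1 + (ℓ : ℤ) ^ a * m * t₁ + ((ℓ : ℤ) ^ a * m) ^ 2 * u₁) :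
    Fintype.card {σ : Matrix (Fin 2) (Fin 2) (ZMod (ℓ ^ (a + (a + w)))) //
        σ.trace = (t : ZMod (ℓ ^ (a + (a + w)))) ∧ σ.det = (u : ZMod (ℓ ^ (a + (a + w)))) ∧
        ∀ i j, ((σ i j).val : ZMod (ℓ ^ a)) =
          (1 : Matrix (Fin 2) (Fin 2) (ZMod (ℓ ^ a))) i j} =
    Fintype.card {σ : Matrix (Fin 2) (Fin 2) (ZMod (ℓ ^ (a + w))) //
        σ.trace = (t₁ : ZMod (ℓ ^ (a + w))) ∧
        (((σ.det).val : ZMod (ℓ ^ w)) = (u₁ : ZMod (ℓ ^ w)))} := by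
  have hℓ0 : ℓ ≠ 0 := hℓ.ne_zero
  set N : ℕ := a + (a + w) with hNdef
  have hNdef' : N = a + (a + w) := hNdef
  -- divisibilities among the moduli
  have hdvd_aN : ℓ ^ a ∣ ℓ ^ N := pow_dvd_pow ℓ (by omega)
  have hdvd_wS : ℓ ^ w ∣ ℓ ^ (a + w) := pow_dvd_pow ℓ (by omega)
  -- coprimality and the inverse of m
  have hcm : Nat.Coprime m ℓ := (hℓ.coprime_iff_not_dvd.mpr hm).symm
  have hcopS : Nat.Coprime m (ℓ ^ (a + w)) := hcm.pow_right _
  have hcopT : Nat.Coprime m (ℓ ^ w) := hcm.pow_right _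
  obtain ⟨m', y, hxy⟩ : IsCoprime (m : ℤ) ((ℓ ^ (a + w) : ℕ) : ℤ) :=
    Nat.isCoprime_iff_coprime.mpr hcopS
  have hm' : ((m' * m : ℤ) : ZMod (ℓ ^ (a + w))) = 1 := by
    have h0 : (((ℓ ^ (a + w) : ℕ) : ℤ) : ZMod (ℓ ^ (a + w))) = 0 := by
      rw [Int.cast_natCast, ZMod.natCast_self]
    have : ((m' * m + y * ((ℓ ^ (a+w) : ℕ) : ℤ) : ℤ) : ZMod (ℓ ^ (a+w))) = ((1 : ℤ) : ZMod (ℓ^(a+w))) := by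
      rw [hxy]
    push_cast at this h0 ⊢
    linear_combination this - (y : ZMod (ℓ ^ (a + w))) * h0
  -- basic cancellation lemmas
  have canA : ∀ x z : ℤ, ((((ℓ:ℤ)^a * m * x : ℤ) : ZMod (ℓ ^ N)) = (((ℓ:ℤ)^a * m * z : ℤ) : ZMod (ℓ ^ N)))
      ↔ ((x : ZMod (ℓ ^ (a+w))) = (z : ZMod (ℓ ^ (a+w)))) := by
    intro x z
    have e1 : ∀ v : ℤ, ((ℓ:ℤ)^a * m * v : ℤ) = ((ℓ:ℤ)^a * ((m:ℤ) * v) : ℤ) := by intro v; ring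
    rw [e1, e1, aux_cancel ℓ hℓ0 a (a+w) N hNdef', coprime_cancel hcopS]
  have canB : ∀ x z : ℤ, (((((ℓ:ℤ)^a * m)^2 * x : ℤ) : ZMod (ℓ ^ N)) = ((((ℓ:ℤ)^a * m)^2 * z : ℤ) : ZMod (ℓ ^ N)))
      ↔ ((x : ZMod (ℓ ^ w)) = (z : ZMod (ℓ ^ w))) := by
    intro x z
    have e1 : ∀ v : ℤ, (((ℓ:ℤ)^a * m)^2 * v : ℤ) = ((ℓ:ℤ)^(2*a) * ((m:ℤ) * ((m:ℤ) * v)) : ℤ) := by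
      intro v; ring
    rw [e1, e1, aux_cancel ℓ hℓ0 (2*a) w N (by omega), coprime_cancel hcopT, coprime_cancel hcopT]
  -- the inverse property in the form we use it
  have hminv : ∀ x : ℤ, ((m' * ((m:ℤ) * x) : ℤ) : ZMod (ℓ ^ (a+w))) = ((x : ℤ) : ZMod (ℓ ^ (a+w))) := by
    intro x
    push_cast at hm' ⊢
    linear_combination (x : ZMod (ℓ ^ (a+w))) * hm'
  -- condition transport along Gmap
  have hcond : ∀ τ : Matrix (Fin 2) (Fin 2) (ZMod (ℓ ^ (a+w))),
      ((Gmap (ℓ^N) (ℓ^(a+w)) ((ℓ:ℤ)^a * m) τ).trace = (t : ZMod (ℓ^N)) ∧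
       (Gmap (ℓ^N) (ℓ^(a+w)) ((ℓ:ℤ)^a * m) τ).det = (u : ZMod (ℓ^N)))
      ↔ (τ.trace = (t₁ : ZMod (ℓ^(a+w))) ∧
         ((τ.det.val : ZMod (ℓ^w)) = (u₁ : ZMod (ℓ^w)))) := by
    intro τ
    set L : ℤ := ((τ 0 0).val : ℤ) + ((τ 1 1).val : ℤ) with hLdef
    set D : ℤ := ((τ 0 0).val : ℤ) * ((τ 1 1).val : ℤ)
      - ((τ 0 1).val : ℤ) * ((τ 1 0).val : ℤ) with hDdef
    have hLS : ((L : ℤ) : ZMod (ℓ^(a+w))) = τ.trace := by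
      rw [Matrix.trace_fin_two, hLdef]
      push_cast
      simp [ZMod.natCast_val, ZMod.cast_id]
    have hDS : ((D : ℤ) : ZMod (ℓ^(a+w))) = τ.det := by
      rw [Matrix.det_fin_two, hDdef]
      push_cast
      simp [ZMod.natCast_val, ZMod.cast_id]
    have hDT : ((τ.det.val : ℕ) : ZMod (ℓ^w)) = ((D : ℤ) : ZMod (ℓ^w)) := by
      rw [← hDS, val_cast_down' _ _ hdvd_wS]
    have htr_iff : ((Gmap (ℓ^N) (ℓ^(a+w)) ((ℓ:ℤ)^a * m) τ).trace = (t : ZMod (ℓ^N)))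
        ↔ ((L : ℤ) : ZMod (ℓ^(a+w))) = ((t₁ : ℤ) : ZMod (ℓ^(a+w))) := by
      rw [Gmap_trace, ht, ← hLdef]
      rw [show ((2 + (ℓ:ℤ)^a * m * t₁ : ℤ) : ZMod (ℓ^N))
          = ((2 : ℤ) : ZMod (ℓ^N)) + (((ℓ:ℤ)^a * m * t₁ : ℤ) : ZMod (ℓ^N)) by push_cast; ring,
        show ((2 + (ℓ:ℤ)^a * m * L : ℤ) : ZMod (ℓ^N))
          = ((2 : ℤ) : ZMod (ℓ^N)) + (((ℓ:ℤ)^a * m * L : ℤ) : ZMod (ℓ^N)) by push_cast; ring,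
        add_right_inj]
      exact canA L t₁
    constructor
    · rintro ⟨h1, h2⟩
      have hL : ((L : ℤ) : ZMod (ℓ^(a+w))) = ((t₁ : ℤ) : ZMod (ℓ^(a+w))) := htr_iff.1 h1
      refine ⟨by rw [← hLS, hL], ?_⟩
      have hcl : (((ℓ:ℤ)^a * m * L : ℤ) : ZMod (ℓ^N)) = (((ℓ:ℤ)^a * m * t₁ : ℤ) : ZMod (ℓ^N)) :=
        (canA L t₁).2 hL
      rw [Gmap_det, hu, ← hLdef, ← hDdef] at h2
      have h3 : ((((ℓ:ℤ)^a * m)^2 * D : ℤ) : ZMod (ℓ^N))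
          = ((((ℓ:ℤ)^a * m)^2 * u₁ : ℤ) : ZMod (ℓ^N)) := by
        push_cast at h2 hcl ⊢
        linear_combination h2 - hcl
      rw [hDT]
      exact (canB D u₁).1 h3
    · rintro ⟨h1, h2⟩
      have hL : ((L : ℤ) : ZMod (ℓ^(a+w))) = ((t₁ : ℤ) : ZMod (ℓ^(a+w))) := by rw [hLS, h1]
      have hcl : (((ℓ:ℤ)^a * m * L : ℤ) : ZMod (ℓ^N)) = (((ℓ:ℤ)^a * m * t₁ : ℤ) : ZMod (ℓ^N)) :=
        (canA L t₁).2 hL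
      have hD : ((D : ℤ) : ZMod (ℓ^w)) = ((u₁ : ℤ) : ZMod (ℓ^w)) := by rw [← hDT, h2]
      have h3 : ((((ℓ:ℤ)^a * m)^2 * D : ℤ) : ZMod (ℓ^N))
          = ((((ℓ:ℤ)^a * m)^2 * u₁ : ℤ) : ZMod (ℓ^N)) := (canB D u₁).2 hD
      refine ⟨htr_iff.2 hL, ?_⟩
      rw [Gmap_det, hu, ← hLdef, ← hDdef]
      push_cast at hcl h3 ⊢
      linear_combination hcl + h3
  -- Gmap lands in matrices congruent to the identity
  have hGcongr : ∀ (τ : Matrix (Fin 2) (Fin 2) (ZMod (ℓ ^ (a+w)))) (i j : Fin 2),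
      (((Gmap (ℓ^N) (ℓ^(a+w)) ((ℓ:ℤ)^a * m) τ i j).val : ZMod (ℓ ^ a)) =
        (1 : Matrix (Fin 2) (Fin 2) (ZMod (ℓ ^ a))) i j) := by
    intro τ i j
    rw [Matrix.one_apply, Gmap_apply, val_cast_down' _ _ hdvd_aN]
    have h0 : ((ℓ : ZMod (ℓ^a)))^a = 0 := by
      rw [← Nat.cast_pow, ZMod.natCast_self]
    push_cast [h0]
    split <;> norm_num
  -- F ∘ G = id
  have hFG : ∀ τ : Matrix (Fin 2) (Fin 2) (ZMod (ℓ ^ (a+w))),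
      Fmap (ℓ^N) (ℓ^(a+w)) ((ℓ:ℤ)^a) m' (Gmap (ℓ^N) (ℓ^(a+w)) ((ℓ:ℤ)^a * m) τ) = τ := by
    intro τ
    ext i j
    rw [Fmap_apply]
    set v : ℤ := ((τ i j).val : ℤ) with hv
    set V : ℤ := ((Gmap (ℓ^N) (ℓ^(a+w)) ((ℓ:ℤ)^a * m) τ i j).val : ℤ) with hV
    set δ : ℤ := (if i = j then (1:ℤ) else 0) with hδ
    have hval : ((V : ℤ) : ZMod (ℓ^N)) = ((δ + (ℓ:ℤ)^a * m * v : ℤ) : ZMod (ℓ^N)) := by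
      rw [hV, val_cast_id, Gmap_apply]
    have hdvd : (ℓ:ℤ)^a ∣ V - δ := by
      have h1 : (ℓ:ℤ)^a ∣ ((ℓ^N : ℕ) : ℤ) := by push_cast; exact pow_dvd_pow _ (by omega)
      rw [ZMod.intCast_eq_intCast_iff, Int.modEq_iff_dvd] at hval
      have h2 : (ℓ:ℤ)^a ∣ (δ + (ℓ:ℤ)^a * m * v) - V := h1.trans hval
      have h3 : (ℓ:ℤ)^a ∣ (ℓ:ℤ)^a * m * v := ⟨m * v, by ring⟩
      have := dvd_sub h3 h2
      convert this using 1
      · rfl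
      ring
    have hEe : (ℓ:ℤ)^a * ((V - δ) / (ℓ:ℤ)^a) = V - δ := Int.mul_ediv_cancel' hdvd
    set E : ℤ := (V - δ) / (ℓ:ℤ)^a with hE
    have h4 : (((ℓ:ℤ)^a * E : ℤ) : ZMod (ℓ^N)) = (((ℓ:ℤ)^a * ((m:ℤ) * v) : ℤ) : ZMod (ℓ^N)) := by
      rw [hEe]
      push_cast at hval ⊢
      linear_combination hval
    have h5 : ((E : ℤ) : ZMod (ℓ^(a+w))) = (((m:ℤ) * v : ℤ) : ZMod (ℓ^(a+w))) :=
      (aux_cancel ℓ hℓ0 a (a+w) N hNdef' E ((m:ℤ) * v)).1 h4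
    calc ((m' * E : ℤ) : ZMod (ℓ^(a+w)))
        = ((m' * ((m:ℤ) * v) : ℤ) : ZMod (ℓ^(a+w))) := by
          push_cast at h5 ⊢
          linear_combination (m' : ZMod (ℓ^(a+w))) * h5
      _ = ((v : ℤ) : ZMod (ℓ^(a+w))) := hminv v
      _ = τ i j := val_cast_id _ _
  -- G ∘ F = id on matrices congruent to the identity
  have hGF : ∀ σ : Matrix (Fin 2) (Fin 2) (ZMod (ℓ ^ N)),
      (∀ i j, ((σ i j).val : ZMod (ℓ ^ a)) =
        (1 : Matrix (Fin 2) (Fin 2) (ZMod (ℓ ^ a))) i j) →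
      Gmap (ℓ^N) (ℓ^(a+w)) ((ℓ:ℤ)^a * m) (Fmap (ℓ^N) (ℓ^(a+w)) ((ℓ:ℤ)^a) m' σ) = σ := by
    intro σ hσ
    ext i j
    rw [Gmap_apply]
    set V : ℤ := ((σ i j).val : ℤ) with hV
    set δ : ℤ := (if i = j then (1:ℤ) else 0) with hδ
    have hδ2 : ((V : ℤ) : ZMod (ℓ^a)) = ((δ : ℤ) : ZMod (ℓ^a)) := by
      have h1 := hσ i j
      rw [Matrix.one_apply] at h1
      rw [hV, Int.cast_natCast, h1, hδ]
      split <;> norm_num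
    have hdvd : (ℓ:ℤ)^a ∣ V - δ := by
      rw [ZMod.intCast_eq_intCast_iff, Int.modEq_iff_dvd] at hδ2
      push_cast at hδ2
      exact (dvd_sub_comm).mp hδ2
    have hEe : (ℓ:ℤ)^a * ((V - δ) / (ℓ:ℤ)^a) = V - δ := Int.mul_ediv_cancel' hdvd
    set E : ℤ := (V - δ) / (ℓ:ℤ)^a with hE
    set W : ℤ := ((Fmap (ℓ^N) (ℓ^(a+w)) ((ℓ:ℤ)^a) m' σ i j).val : ℤ) with hW
    have hWS : ((W : ℤ) : ZMod (ℓ^(a+w))) = ((m' * E : ℤ) : ZMod (ℓ^(a+w))) := by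
      rw [hW, val_cast_id, Fmap_apply]
    have h5 : (((m:ℤ) * W : ℤ) : ZMod (ℓ^(a+w))) = ((E : ℤ) : ZMod (ℓ^(a+w))) := by
      have h6 : ((m' * ((m:ℤ) * E) : ℤ) : ZMod (ℓ^(a+w))) = ((E : ℤ) : ZMod (ℓ^(a+w))) := hminv E
      push_cast at hWS h6 ⊢
      linear_combination (m : ZMod (ℓ^(a+w))) * hWS + h6
    have h6 : (((ℓ:ℤ)^a * ((m:ℤ) * W) : ℤ) : ZMod (ℓ^N))
        = (((ℓ:ℤ)^a * E : ℤ) : ZMod (ℓ^N)) :=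
      (aux_cancel ℓ hℓ0 a (a+w) N hNdef' ((m:ℤ) * W) E).2 h5
    have h7 : (((ℓ:ℤ)^a * E : ℤ) : ZMod (ℓ^N)) = ((V - δ : ℤ) : ZMod (ℓ^N)) := by rw [hEe]
    have hVid : ((V : ℤ) : ZMod (ℓ^N)) = σ i j := val_cast_id _ _
    rw [← hVid]
    push_cast at h6 h7 ⊢
    linear_combination h6 + h7
  -- assemble the equivalence
  refine Fintype.card_congr ?_
  refine
    { toFun := fun σ => ⟨Fmap (ℓ^N) (ℓ^(a+w)) ((ℓ:ℤ)^a) m' σ.1, ?_⟩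
      invFun := fun τ => ⟨Gmap (ℓ^N) (ℓ^(a+w)) ((ℓ:ℤ)^a * m) τ.1,
        ((hcond τ.1).2 τ.2).1, ((hcond τ.1).2 τ.2).2, hGcongr τ.1⟩
      left_inv := fun σ => Subtype.ext (hGF σ.1 σ.2.2.2)
      right_inv := fun τ => Subtype.ext (hFG τ.1) }
  · exact (hcond _).1 (by rw [hGF σ.1 σ.2.2.2]; exact ⟨σ.2.1, σ.2.2.1⟩)

open Classical in
theorem core (ℓ : ℕ) (hℓ : ℓ.Prime) [NeZero ℓ] (r a : ℕ) (hra : 2 * a ≤ r)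
    (m : ℕ) (hm : ¬ ℓ ∣ m) (t u t₁ u₁ : ℤ)
    (ht : t = 2 + (ℓ : ℤ) ^ a * m * t₁)
    (hu : u = 1 + (ℓ : ℤ) ^ a * m * t₁ + ((ℓ : ℤ) ^ a * m) ^ 2 * u₁) :
    Fintype.card {σ : Matrix (Fin 2) (Fin 2) (ZMod (ℓ ^ r)) //
        σ.trace = (t : ZMod (ℓ ^ r)) ∧ σ.det = (u : ZMod (ℓ ^ r)) ∧
        ∀ i j, ((σ i j).val : ZMod (ℓ ^ a)) =
          (1 : Matrix (Fin 2) (Fin 2) (ZMod (ℓ ^ a))) i j} =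
    Fintype.card {σ : Matrix (Fin 2) (Fin 2) (ZMod (ℓ ^ (r - a))) //
        σ.trace = (t₁ : ZMod (ℓ ^ (r - a))) ∧
        (((σ.det).val : ZMod (ℓ ^ (r - 2 * a))) = (u₁ : ZMod (ℓ ^ (r - 2 * a))))} := by
  obtain ⟨w, rfl⟩ : ∃ w, r = a + (a + w) := ⟨r - 2 * a, by omega⟩
  rw [show a + (a + w) - a = a + w from by omega,
    show a + (a + w) - 2 * a = w from by omega]
  exact core' ℓ hℓ a w m hm t u t₁ u₁ ht hu


open Classical in
/-- Let `ℓ` be prime, `r ≥ 1`, and `t, u, n` integers with `n ≥ 1`, `u ≡ 1 (mod n)`,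
`u + 1 − t ≡ 0 (mod n²)`. Write `a = ν_ℓ(n)`, `t₁ = (t−2)/n`, `u₁ = (u+1−t)/n²`.
Assuming `r ≥ 2a`,
`#{σ ∈ M₂(ℤ/ℓ^r ℤ) : tr σ ≡ t, det σ ≡ u (mod ℓ^r), σ ≡ I (mod ℓ^a)}
  = Σ_{u₂ mod ℓ^{r−a}, u₂ ≡ u₁ (mod ℓ^{r−2a})}
      #{σ ∈ M₂(ℤ/ℓ^{r−a} ℤ) : tr σ ≡ t₁, det σ ≡ u₂ (mod ℓ^{r−a})}`. -/
theorem card_matrices_congruent_identity (ℓ : ℕ) (hℓ : ℓ.Prime) [NeZero ℓ]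
    (r : ℕ) (hr1 : 1 ≤ r) (t u : ℤ) (n : ℕ) (hn : 1 ≤ n)
    (hu : (n : ℤ) ∣ u - 1) (hut : ((n : ℤ)) ^ 2 ∣ u + 1 - t)
    (hra : 2 * padicValNat ℓ n ≤ r) :
    Fintype.card {σ : Matrix (Fin 2) (Fin 2) (ZMod (ℓ ^ r)) //
        σ.trace = (t : ZMod (ℓ ^ r)) ∧ σ.det = (u : ZMod (ℓ ^ r)) ∧
        ∀ i j, ((σ i j).val : ZMod (ℓ ^ padicValNat ℓ n)) =
          (1 : Matrix (Fin 2) (Fin 2) (ZMod (ℓ ^ padicValNat ℓ n))) i j} =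
      ∑ u₂ : ZMod (ℓ ^ (r - padicValNat ℓ n)),
        if ((u₂.val : ZMod (ℓ ^ (r - 2 * padicValNat ℓ n))) =
            (((u + 1 - t) / (n : ℤ) ^ 2 : ℤ) : ZMod (ℓ ^ (r - 2 * padicValNat ℓ n)))) then
          Fintype.card {σ : Matrix (Fin 2) (Fin 2) (ZMod (ℓ ^ (r - padicValNat ℓ n))) //
            σ.trace = (((t - 2) / (n : ℤ) : ℤ) : ZMod (ℓ ^ (r - padicValNat ℓ n))) ∧
            σ.det = u₂}
        else 0 := by
  set a := padicValNat ℓ n with ha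
  set t₁ : ℤ := (t - 2) / (n : ℤ) with ht₁
  set u₁ : ℤ := (u + 1 - t) / (n : ℤ) ^ 2 with hu₁
  -- rewrite RHS with sum_fiber
  rw [sum_fiber (fun σ : Matrix (Fin 2) (Fin 2) (ZMod (ℓ ^ (r - a))) => σ.det)
      (fun σ => σ.trace = (t₁ : ZMod (ℓ ^ (r - a))))
      (fun u₂ => ((u₂.val : ZMod (ℓ ^ (r - 2 * a))) = (u₁ : ZMod (ℓ ^ (r - 2 * a)))))]
  haveI := Fact.mk hℓ
  have hn0 : n ≠ 0 := by omega
  set m : ℕ := n / ℓ ^ a with hmdef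
  have hnm : ℓ ^ a * m = n := Nat.mul_div_cancel' pow_padicValNat_dvd
  have hm : ¬ ℓ ∣ m := by
    intro ⟨k, hk⟩
    refine pow_succ_padicValNat_not_dvd (p := ℓ) hn0 ⟨k, ?_⟩
    conv_lhs => rw [← hnm, hk]
    ring
  have hdt : (n : ℤ) ∣ t - 2 := by
    have h2 : (n : ℤ) ∣ u + 1 - t := dvd_trans (Dvd.intro n (by push_cast; ring)) hut
    have := dvd_sub hu h2
    convert this using 1; · rfl
    ring
  have ht : (n : ℤ) * t₁ = t - 2 := Int.mul_ediv_cancel' hdt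
  have hue : (n : ℤ) ^ 2 * u₁ = u + 1 - t := Int.mul_ediv_cancel' hut
  have hncast : (n : ℤ) = (ℓ : ℤ) ^ a * m := by
    conv_lhs => rw [← hnm]
    push_cast; ring
  exact core ℓ hℓ r a hra m hm t u t₁ u₁
    (by rw [← hncast]; linarith)
    (by rw [← hncast]; linarith [hue, ht])
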